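/- If a freely reduced word π is a piece of rank i, then the freely reduced words representing φ(π) and φ^{-1}(π) are also pieces of rank i and have the same type as π. -/

import Mathlib

open FreeGroup SemidirectProduct

/-- Words on the letters `a₁^{±1}, …, a_m^{±1}` (`(i, true)` is `a_{i+1}`,
`(i, false)` is `a_{i+1}⁻¹`, with 0-based `Fin`-indexing of the generators). -/
abbrev FWord (m : ℕ) := List (Fin m × Bool)

/-- A word is freely reduced. -/
def Reduced {m : ℕ} (w : FWord m) : Prop := FreeGroup.reduce w = w

/-- `φ` is the automorphism of `F = F(a₁, …, a_m)` with `φ(a₁) = a₁` and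
`φ(aᵢ) = aᵢ aᵢ₋₁` for `2 ≤ i ≤ m`. -/
def IsHydraAut (m : ℕ) (φ : FreeGroup (Fin m) ≃* FreeGroup (Fin m)) : Prop :=
  ∀ i : Fin m, φ (FreeGroup.of i) =
    if i.val = 0 then FreeGroup.of i
    else FreeGroup.of i *
      FreeGroup.of (⟨i.val - 1, Nat.lt_of_le_of_lt (Nat.sub_le _ _) i.isLt⟩ : Fin m)

/-- The free-by-cyclic group `H_m = F ⋊_φ ℤ`; here `s = inr (ofAdd 1)` and the defining
relation `s⁻¹ aᵢ s = φ(aᵢ)` holds.  The normal form `ũ s^p` is the element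
`⟨ũ, Multiplicative.ofAdd p⟩`. -/
abbrev Hgrp (m : ℕ) (φ : FreeGroup (Fin m) ≃* FreeGroup (Fin m)) :=
  FreeGroup (Fin m) ⋊[zpowersHom (MulAut (FreeGroup (Fin m))) φ⁻¹] Multiplicative ℤ

/-- Letters of words over the generators of `H_m`: `some i` is `a_{i+1}`, `none` is `s`. -/
abbrev HWord (m : ℕ) := List (Option (Fin m) × Bool)

def hLetter {m : ℕ} (φ : FreeGroup (Fin m) ≃* FreeGroup (Fin m)) (x : Option (Fin m) × Bool) :
    Hgrp m φ :=
  match x.1 with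
  | some i => cond x.2 (SemidirectProduct.inl (FreeGroup.of i))
      (SemidirectProduct.inl (FreeGroup.of i))⁻¹
  | none => cond x.2 (SemidirectProduct.inr (Multiplicative.ofAdd (1:ℤ)))
      (SemidirectProduct.inr (Multiplicative.ofAdd (1:ℤ)))⁻¹

/-- The element of `H_m` represented by a word on `a₁^{±1}, …, a_m^{±1}, s^{±1}`. -/
def evalH {m : ℕ} (φ : FreeGroup (Fin m) ≃* FreeGroup (Fin m)) (w : HWord m) : Hgrp m φ :=
  (w.map (hLetter φ)).prod

/-- Word length in `H_m` w.r.t. the generating set `{a₁, …, a_m, s}`. -/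
noncomputable def lenH {m : ℕ} (φ : FreeGroup (Fin m) ≃* FreeGroup (Fin m)) (g : Hgrp m φ) : ℕ :=
  sInf {n | ∃ w : HWord m, evalH φ w = g ∧ w.length = n}

/-- Word length in `F` w.r.t. the generating set `{a₁, …, a_m}`. -/
noncomputable def lenF {m : ℕ} (g : FreeGroup (Fin m)) : ℕ :=
  sInf {n | ∃ w : FWord m, FreeGroup.mk w = g ∧ w.length = n}

/-- The rank of a word: the maximal `i` such that `aᵢ^{±1}` occurs in it (a letter with
`Fin`-index `j` is `a_{j+1}`, so it contributes `j+1`); the empty word has rank `0`. -/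
def wrank {m : ℕ} (w : FWord m) : ℕ := (w.map (fun x => x.1.val + 1)).foldr max 0

/-- The four types of rank-`i` pieces: `aᵢ u`, `u aᵢ⁻¹`, `aᵢ u aᵢ⁻¹`, `u`. -/
inductive PieceType | head | tail | both | plain
deriving DecidableEq

/-- `π` is a rank-`i` piece of the given type: `aᵢ u`, `u aᵢ⁻¹`, `aᵢ u aᵢ⁻¹` or `u`,
where `u` is a (possibly empty) word of rank at most `i - 1`.  Pieces of the first three
types have strict rank `i`. -/
def IsPieceType {m : ℕ} (i : ℕ) (t : PieceType) (π : FWord m) : Prop :=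
  match t with
  | .head => ∃ (x : Fin m × Bool) (u : FWord m),
      π = x :: u ∧ x.1.val + 1 = i ∧ x.2 = true ∧ wrank u < i
  | .tail => ∃ (x : Fin m × Bool) (u : FWord m),
      π = u ++ [x] ∧ x.1.val + 1 = i ∧ x.2 = false ∧ wrank u < i
  | .both => ∃ (j : Fin m) (u : FWord m),
      π = (j, true) :: (u ++ [(j, false)]) ∧ j.val + 1 = i ∧ wrank u < i
  | .plain => wrank π < i

def IsPiece {m : ℕ} (i : ℕ) (π : FWord m) : Prop := ∃ t, IsPieceType i t π

/-- The rank-`i` piece decomposition of `w`: a decomposition into rank-`i` pieces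
with the minimal possible number of pieces. -/
def IsPieceDecomp {m : ℕ} (i : ℕ) (w : FWord m) (L : List (FWord m)) : Prop :=
  L.flatten = w ∧ (∀ π ∈ L, IsPiece i π) ∧
    ∀ L' : List (FWord m), L'.flatten = w → (∀ π ∈ L', IsPiece i π) → L.length ≤ L'.length

/-- The number of pieces in the rank-`i` decomposition of `w`, for `i = wrank w`. -/
noncomputable def piecesCount {m : ℕ} (w : FWord m) : ℕ :=
  sInf {p | ∃ L : List (FWord m),
    L.flatten = w ∧ (∀ π ∈ L, IsPiece (wrank w) π) ∧ L.length = p}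

/-- The number of pieces of an element of the free group. -/
noncomputable def piecesCountF {m : ℕ} (g : FreeGroup (Fin m)) : ℕ :=
  piecesCount (FreeGroup.toWord g)

section Helpers
variable {m : ℕ}

lemma mem_reduce' {α : Type*} [DecidableEq α] {x : α × Bool} :
    ∀ {w : List (α × Bool)}, x ∈ FreeGroup.reduce w → x ∈ w := by
  intro w
  induction w with
  | nil => simp
  | cons a w ih =>
    rw [FreeGroup.reduce.cons]
    cases h : FreeGroup.reduce w with
    | nil =>
      intro hx
      simp only [List.mem_singleton] at hx
      simp [hx]
    | cons b t =>
      by_cases hc : a.1 = b.1 ∧ a.2 = !b.2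
      · dsimp only
        rw [if_pos hc]
        intro hx
        exact List.mem_cons_of_mem a (ih (h ▸ List.mem_cons_of_mem b hx))
      · dsimp only
        rw [if_neg hc]
        intro hx
        rcases List.mem_cons.1 hx with rfl | hx
        · exact List.mem_cons_self
        · exact List.mem_cons_of_mem a (ih (h ▸ hx))

def Bnd {m : ℕ} (k : ℕ) (g : FreeGroup (Fin m)) : Prop :=
  ∀ x ∈ g.toWord, x.1.val + 1 ≤ k

lemma Bnd_one {k : ℕ} : Bnd (m := m) k 1 := by
  intro x hx; rw [FreeGroup.toWord_one] at hx; simp at hx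

lemma Bnd_of {k : ℕ} {j : Fin m} (h : j.val + 1 ≤ k) : Bnd k (FreeGroup.of j) := by
  intro x hx; rw [FreeGroup.toWord_of] at hx; simp at hx; simp [hx, h]

lemma Bnd_mul {k : ℕ} {g h : FreeGroup (Fin m)} (hg : Bnd k g) (hh : Bnd k h) :
    Bnd k (g * h) := by
  intro x hx
  have : g * h = FreeGroup.mk (g.toWord ++ h.toWord) := by
    rw [← FreeGroup.mul_mk, FreeGroup.mk_toWord, FreeGroup.mk_toWord]
  rw [this, FreeGroup.toWord_mk] at hx
  rcases List.mem_append.1 (mem_reduce' hx) with hx | hx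
  · exact hg x hx
  · exact hh x hx

lemma Bnd_inv {k : ℕ} {g : FreeGroup (Fin m)} (hg : Bnd k g) : Bnd k g⁻¹ := by
  intro x hx
  rw [FreeGroup.toWord_inv, FreeGroup.invRev] at hx
  simp only [List.mem_reverse, List.mem_map] at hx
  obtain ⟨y, hy, rfl⟩ := hx
  exact hg y hy

lemma Bnd_mono {k k' : ℕ} (h : k ≤ k') {g : FreeGroup (Fin m)} (hg : Bnd k g) : Bnd k' g :=
  fun x hx => le_trans (hg x hx) h

lemma wrank_le_iff {w : FWord m} {k : ℕ} :
    wrank w ≤ k ↔ ∀ x ∈ w, x.1.val + 1 ≤ k := by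
  induction w with
  | nil => simp [wrank]
  | cons a w ih =>
    simp only [wrank, List.map_cons, List.foldr_cons, max_le_iff, List.mem_cons] at *
    constructor
    · rintro ⟨h1, h2⟩ x (rfl | hx)
      · exact h1
      · exact ih.1 h2 x hx
    · intro h
      exact ⟨h a (Or.inl rfl), ih.2 fun x hx => h x (Or.inr hx)⟩

lemma reduce_cons_head {x : Fin m × Bool} {w : FWord m} (hw : FreeGroup.reduce w = w)
    (hhd : ∀ y ∈ w.head?, ¬(x.1 = y.1 ∧ x.2 = !y.2)) :
    FreeGroup.reduce (x :: w) = x :: w := by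
  rw [FreeGroup.reduce.cons, hw]
  cases w with
  | nil => rfl
  | cons b t =>
    simp only [List.head?_cons, Option.mem_some_iff, forall_eq] at hhd
    exact if_neg (hhd b rfl)

lemma toWord_of_mul {j : Fin m} {g : FreeGroup (Fin m)}
    (hhd : ∀ y ∈ g.toWord.head?, y.1 ≠ j) :
    (FreeGroup.of j * g).toWord = (j, true) :: g.toWord := by
  have h1 : FreeGroup.of j * g = FreeGroup.mk ((j, true) :: g.toWord) := by
    rw [← FreeGroup.mk_toWord (x := g), FreeGroup.of, FreeGroup.mul_mk]
    rw [FreeGroup.mk_toWord]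
    rfl
  rw [h1, FreeGroup.toWord_mk]
  exact reduce_cons_head (FreeGroup.reduce_toWord g)
    (fun y hy hc => hhd y hy hc.1.symm)

lemma invRev_cons {α : Type*} (x : α × Bool) (L : List (α × Bool)) :
    FreeGroup.invRev (x :: L) = FreeGroup.invRev L ++ [(x.1, !x.2)] := by
  simp [FreeGroup.invRev]

lemma toWord_mul_inv {j : Fin m} {g : FreeGroup (Fin m)}
    (hhd : ∀ y ∈ (g⁻¹).toWord.head?, y.1 ≠ j) :
    (g * (FreeGroup.of j)⁻¹).toWord = g.toWord ++ [(j, false)] := by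
  have h1 : (g * (FreeGroup.of j)⁻¹)⁻¹ = FreeGroup.of j * g⁻¹ := by
    simp [mul_inv_rev]
  have h2 : (FreeGroup.of j * g⁻¹).toWord = (j, true) :: (g⁻¹).toWord :=
    toWord_of_mul hhd
  have h3 : (g * (FreeGroup.of j)⁻¹).toWord
      = FreeGroup.invRev (((g * (FreeGroup.of j)⁻¹)⁻¹).toWord) := by
    rw [FreeGroup.toWord_inv, FreeGroup.invRev_invRev]
  rw [h3, h1, h2, _root_.invRev_cons, FreeGroup.toWord_inv, FreeGroup.invRev_invRev]
  rfl

end Helpers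

section Main
variable {m : ℕ}

lemma mk_singleton_true (j : Fin m) : FreeGroup.mk [(j, true)] = FreeGroup.of j := rfl

lemma mk_singleton_false (j : Fin m) : FreeGroup.mk [(j, false)] = (FreeGroup.of j)⁻¹ := by
  show _ = (FreeGroup.mk [(j, true)])⁻¹
  rw [FreeGroup.inv_mk]; rfl

lemma Bnd_psi_mk (ψ : FreeGroup (Fin m) ≃* FreeGroup (Fin m))
    (hψ : ∀ j : Fin m, ∃ c, ψ (FreeGroup.of j) = FreeGroup.of j * c ∧ Bnd j.val c)
    {k : ℕ} : ∀ (w : FWord m), (∀ x ∈ w, x.1.val + 1 ≤ k) → Bnd k (ψ (FreeGroup.mk w)) := by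
  intro w
  induction w with
  | nil =>
    intro _
    have : FreeGroup.mk ([] : FWord m) = 1 := rfl
    rw [this, _root_.map_one]
    exact Bnd_one
  | cons x w ih =>
    intro hx
    have hsplit : FreeGroup.mk (x :: w) = FreeGroup.mk [x] * FreeGroup.mk w := by
      rw [FreeGroup.mul_mk]; rfl
    obtain ⟨c, hc, hcB⟩ := hψ x.1
    have hk : x.1.val + 1 ≤ k := hx x (List.mem_cons_self)
    have hhead : Bnd k (ψ (FreeGroup.mk [x])) := by
      have hB : Bnd k (ψ (FreeGroup.of x.1)) := by
        rw [hc]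
        exact Bnd_mul (Bnd_of hk) (Bnd_mono (Nat.le_of_succ_le hk) hcB)
      cases hb : x.2 with
      | true =>
        have : FreeGroup.mk [x] = FreeGroup.of x.1 := by
          rw [← mk_singleton_true x.1]; congr 1; simp [Prod.ext_iff, hb]
        rw [this]; exact hB
      | false =>
        have : FreeGroup.mk [x] = (FreeGroup.of x.1)⁻¹ := by
          rw [← mk_singleton_false x.1]; congr 1; simp [Prod.ext_iff, hb]
        rw [this, _root_.map_inv]
        exact Bnd_inv hB
    rw [hsplit, _root_.map_mul]
    exact Bnd_mul hhead (ih fun y hy => hx y (List.mem_cons_of_mem _ hy))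

lemma head_ne_of_Bnd {j : Fin m} {g : FreeGroup (Fin m)} (hg : Bnd j.val g) :
    ∀ y ∈ g.toWord.head?, y.1 ≠ j := by
  intro y hy
  have hy' : y ∈ g.toWord := by
    cases h : g.toWord with
    | nil => rw [h] at hy; simp at hy
    | cons b t => rw [h] at hy; simp at hy; simp [h, hy]
  have := hg y hy'
  intro hej
  rw [hej] at this
  omega

lemma main_lemma (ψ : FreeGroup (Fin m) ≃* FreeGroup (Fin m))
    (hψ : ∀ j : Fin m, ∃ c, ψ (FreeGroup.of j) = FreeGroup.of j * c ∧ Bnd j.val c)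
    (i : ℕ) (t : PieceType) (π : FWord m)
    (hred : Reduced π) (hp : IsPieceType i t π) :
    IsPieceType i t (FreeGroup.toWord (ψ (FreeGroup.mk π))) := by
  cases t with
  | plain =>
    have hplt : wrank π < i := hp
    have hBnd : Bnd (i - 1) (ψ (FreeGroup.mk π)) := by
      apply Bnd_psi_mk ψ hψ
      intro x hx
      have : x.1.val + 1 ≤ wrank π := wrank_le_iff.1 (le_refl _) x hx
      omega
    show wrank _ < i
    have := wrank_le_iff.2 hBnd
    omega
  | head =>
    obtain ⟨x, u, rfl, hx1, hx2, hu⟩ := hp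
    obtain ⟨c, hc, hcB⟩ := hψ x.1
    have hxeq : x = (x.1, true) := by simp [Prod.ext_iff, hx2]
    have hmk : FreeGroup.mk (x :: u) = FreeGroup.of x.1 * FreeGroup.mk u := by
      conv_lhs => rw [hxeq]
      rw [← mk_singleton_true x.1, FreeGroup.mul_mk]; rfl
    have hg : Bnd x.1.val (c * ψ (FreeGroup.mk u)) := by
      apply Bnd_mul hcB
      apply Bnd_psi_mk ψ hψ
      intro y hy
      have : y.1.val + 1 ≤ wrank u := wrank_le_iff.1 (le_refl _) y hy
      omega
    have heq : ψ (FreeGroup.mk (x :: u)) = FreeGroup.of x.1 * (c * ψ (FreeGroup.mk u)) := by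
      rw [hmk, _root_.map_mul, hc, mul_assoc]
    rw [heq, toWord_of_mul (head_ne_of_Bnd hg)]
    refine ⟨(x.1, true), (c * ψ (FreeGroup.mk u)).toWord, rfl, hx1, rfl, ?_⟩
    have := wrank_le_iff.2 hg
    omega
  | tail =>
    obtain ⟨x, u, rfl, hx1, hx2, hu⟩ := hp
    obtain ⟨c, hc, hcB⟩ := hψ x.1
    have hxeq : x = (x.1, false) := by simp [Prod.ext_iff, hx2]
    have hmk : FreeGroup.mk (u ++ [x]) = FreeGroup.mk u * (FreeGroup.of x.1)⁻¹ := by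
      rw [← FreeGroup.mul_mk]
      conv_lhs => rw [hxeq]
      rw [mk_singleton_false]
    have hg : Bnd x.1.val (ψ (FreeGroup.mk u) * c⁻¹) := by
      apply Bnd_mul _ (Bnd_inv hcB)
      apply Bnd_psi_mk ψ hψ
      intro y hy
      have : y.1.val + 1 ≤ wrank u := wrank_le_iff.1 (le_refl _) y hy
      omega
    have heq : ψ (FreeGroup.mk (u ++ [x]))
        = (ψ (FreeGroup.mk u) * c⁻¹) * (FreeGroup.of x.1)⁻¹ := by
      rw [hmk, _root_.map_mul, _root_.map_inv, hc, mul_inv_rev, ← mul_assoc]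
    rw [heq, toWord_mul_inv (head_ne_of_Bnd (Bnd_inv hg))]
    refine ⟨(x.1, false), (ψ (FreeGroup.mk u) * c⁻¹).toWord, rfl, hx1, rfl, ?_⟩
    have := wrank_le_iff.2 hg
    omega
  | both =>
    obtain ⟨j, u, rfl, hj, hu⟩ := hp
    obtain ⟨c, hc, hcB⟩ := hψ j
    have hmk : FreeGroup.mk ((j, true) :: (u ++ [(j, false)]))
        = FreeGroup.of j * (FreeGroup.mk u * (FreeGroup.of j)⁻¹) := by
      have h' : FreeGroup.of j * (FreeGroup.mk u * (FreeGroup.of j)⁻¹)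
          = FreeGroup.mk ([(j, true)] ++ (u ++ [(j, false)])) := by
        rw [← mk_singleton_false j, ← mk_singleton_true j, FreeGroup.mul_mk, FreeGroup.mul_mk]
      exact h'.symm
    set g := c * ψ (FreeGroup.mk u) * c⁻¹ with hgdef
    have hg : Bnd j.val g := by
      apply Bnd_mul (Bnd_mul hcB _) (Bnd_inv hcB)
      apply Bnd_psi_mk ψ hψ
      intro y hy
      have : y.1.val + 1 ≤ wrank u := wrank_le_iff.1 (le_refl _) y hy
      omega
    have heq : ψ (FreeGroup.mk ((j, true) :: (u ++ [(j, false)])))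
        = FreeGroup.of j * (g * (FreeGroup.of j)⁻¹) := by
      rw [hmk, _root_.map_mul, _root_.map_mul, _root_.map_inv, hc, mul_inv_rev, hgdef]
      group
    have hgne : g ≠ 1 := by
      intro h1
      have : ψ (FreeGroup.mk ((j, true) :: (u ++ [(j, false)]))) = 1 := by
        rw [heq, h1, one_mul, mul_inv_cancel]
      have hπ1 : FreeGroup.mk ((j, true) :: (u ++ [(j, false)])) = 1 :=
        ψ.injective (by rw [this, _root_.map_one])
      have : FreeGroup.toWord (FreeGroup.mk ((j, true) :: (u ++ [(j, false)]))) = [] := by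
        rw [hπ1, FreeGroup.toWord_one]
      rw [FreeGroup.toWord_mk, hred] at this
      simp at this
    have hstep1 : (g * (FreeGroup.of j)⁻¹).toWord = g.toWord ++ [(j, false)] :=
      toWord_mul_inv (head_ne_of_Bnd (Bnd_inv hg))
    have hgw : g.toWord ≠ [] := fun h => hgne (FreeGroup.toWord_eq_nil_iff.1 h)
    have hhd : ∀ y ∈ (g * (FreeGroup.of j)⁻¹).toWord.head?, y.1 ≠ j := by
      rw [hstep1]
      cases hgt : g.toWord with
      | nil => exact absurd hgt hgw
      | cons b t =>
        intro y hy
        simp only [List.cons_append, List.head?_cons, Option.mem_some_iff] at hy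
        subst hy
        have hb : b ∈ g.toWord := by rw [hgt]; exact List.mem_cons_self
        have := hg b hb
        intro hej; rw [hej] at this; omega
    rw [heq, toWord_of_mul hhd, hstep1]
    refine ⟨j, g.toWord, rfl, hj, ?_⟩
    have := wrank_le_iff.2 hg
    omega

end Main

section Final
variable {m : ℕ}

lemma hpsi_phi (φ : FreeGroup (Fin m) ≃* FreeGroup (Fin m)) (hφ : IsHydraAut m φ) :
    ∀ j : Fin m, ∃ c, φ (FreeGroup.of j) = FreeGroup.of j * c ∧ Bnd j.val c := by
  intro j
  by_cases h0 : j.val = 0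
  · exact ⟨1, by rw [hφ j, if_pos h0, mul_one], Bnd_one⟩
  · refine ⟨FreeGroup.of ⟨j.val - 1, Nat.lt_of_le_of_lt (Nat.sub_le _ _) j.isLt⟩,
      by rw [hφ j, if_neg h0], ?_⟩
    apply Bnd_of
    simp only []
    omega

lemma hpsi_phi_inv (φ : FreeGroup (Fin m) ≃* FreeGroup (Fin m)) (hφ : IsHydraAut m φ) :
    ∀ j : Fin m, ∃ c, φ⁻¹ (FreeGroup.of j) = FreeGroup.of j * c ∧ Bnd j.val c := by
  have key : ∀ n : ℕ, ∀ j : Fin m, j.val = n →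
      ∃ c, φ⁻¹ (FreeGroup.of j) = FreeGroup.of j * c ∧ Bnd j.val c := by
    intro n
    induction n with
    | zero =>
      intro j hj
      refine ⟨1, ?_, Bnd_one⟩
      have h1 := hφ j
      rw [if_pos hj] at h1
      rw [mul_one]
      nth_rewrite 1 [← h1]
      rw [MulAut.inv_apply_self]
    | succ k ih =>
      intro j hj
      have hlt : k < m := by omega
      set j' : Fin m := ⟨k, hlt⟩ with hj'def
      have hj0 : ¬ j.val = 0 := by omega
      have hstep := hφ j
      rw [if_neg hj0] at hstep
      have hj'eq : (⟨j.val - 1, Nat.lt_of_le_of_lt (Nat.sub_le _ _) j.isLt⟩ : Fin m) = j' := by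
        apply Fin.ext; simp [hj'def]; omega
      rw [hj'eq] at hstep
      obtain ⟨c', hc', hcB'⟩ := ih j' rfl
      have hmain : FreeGroup.of j = φ⁻¹ (FreeGroup.of j) * φ⁻¹ (FreeGroup.of j') := by
        have h2 := congrArg (fun x => φ⁻¹ x) hstep
        simp only [MulAut.inv_apply_self, _root_.map_mul] at h2
        exact h2
      refine ⟨c'⁻¹ * (FreeGroup.of j')⁻¹, ?_, ?_⟩
      · rw [hc'] at hmain
        have : φ⁻¹ (FreeGroup.of j)
            = FreeGroup.of j * (FreeGroup.of j' * c')⁻¹ := by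
          have := mul_inv_cancel_right (φ⁻¹ (FreeGroup.of j)) (FreeGroup.of j' * c')
          nth_rewrite 2 [hmain]
          exact this.symm
        rw [this, mul_inv_rev]
      · have hkk : j'.val ≤ j.val := by simp [hj'def]; omega
        apply Bnd_mul
        · exact Bnd_mono (by omega) (Bnd_inv hcB')
        · apply Bnd_inv
          apply Bnd_of
          simp [hj'def]; omega
  intro j
  exact key j.val j rfl

/-- Lemma 3.1: if a reduced word `π` is a piece of rank `i`, then the
reduced words representing `φ(π)` and `φ⁻¹(π)` are pieces of rank `i` of the same type. -/
theorem stmt_4 (m : ℕ) (hm : 2 ≤ m)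
    (φ : FreeGroup (Fin m) ≃* FreeGroup (Fin m)) (hφ : IsHydraAut m φ)
    (i : ℕ) (t : PieceType) (π : FWord m)
    (hred : Reduced π) (hpiece : IsPieceType i t π) :
    IsPieceType i t (FreeGroup.toWord (φ (FreeGroup.mk π))) ∧
    IsPieceType i t (FreeGroup.toWord (φ⁻¹ (FreeGroup.mk π))) :=
  ⟨main_lemma φ (hpsi_phi φ hφ) i t π hred hpiece,
   main_lemma φ⁻¹ (hpsi_phi_inv φ hφ) i t π hred hpiece⟩

end Final
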